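/- Let k ≥ 2 and r ≥ 2 be integers, and let z_1, …, z_k be nonzero complex numbers with Re(z_i) ≥ 0 for all i and with z_1^r + ⋯ + z_k^r = 0. Then max_{i=1,…,k} Arg(z_i) − min_{i=1,…,k} Arg(z_i) ≥ π/r. -/

import Mathlib

theorem stmt_1 (k r : ℕ) (hk : 2 ≤ k) (hr : 2 ≤ r)
    (z : Fin k → ℂ) (hz0 : ∀ i, z i ≠ 0) (hre : ∀ i, 0 ≤ (z i).re)
    (hsum : ∑ i, (z i) ^ r = 0) :
    Real.pi / r ≤
      Finset.univ.sup' ⟨⟨0, by omega⟩, Finset.mem_univ _⟩ (fun i => (z i).arg)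
        - Finset.univ.inf' ⟨⟨0, by omega⟩, Finset.mem_univ _⟩ (fun i => (z i).arg) := by
  by_contra hcon
  push_neg at hcon
  have hne : (Finset.univ : Finset (Fin k)).Nonempty := ⟨⟨0, by omega⟩, Finset.mem_univ _⟩
  set M := Finset.univ.sup' hne (fun i => (z i).arg) with hMdef
  set m := Finset.univ.inf' hne (fun i => (z i).arg) with hmdef
  have hcon' : M - m < Real.pi / r := hcon
  have hr0 : (0 : ℝ) < r := by positivity
  have h1 : (r : ℝ) * (M - m) < Real.pi := (lt_div_iff₀' hr0).mp hcon'
  set θ : ℝ := r * (m + M) / 2 with hθdef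
  have key : ∀ i, 0 < (z i ^ r * Complex.exp (-(θ : ℂ) * Complex.I)).re := by
    intro i
    have ha1 : m ≤ (z i).arg := Finset.inf'_le (fun i => (z i).arg) (Finset.mem_univ i)
    have ha2 : (z i).arg ≤ M := Finset.le_sup' (fun i => (z i).arg) (Finset.mem_univ i)
    set a := (z i).arg with hadef
    set c := ‖z i‖ with hcdef
    have hc0 : 0 < c := norm_pos_iff.mpr (hz0 i)
    have hz : z i = (c : ℂ) * Complex.exp ((a : ℂ) * Complex.I) :=
      (Complex.norm_mul_exp_arg_mul_I (z i)).symm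
    have heq : z i ^ r * Complex.exp (-(θ : ℂ) * Complex.I)
        = ((c ^ r : ℝ) : ℂ) * Complex.exp (((r * a - θ : ℝ) : ℂ) * Complex.I) := by
      rw [hz, mul_pow, ← Complex.exp_nat_mul, mul_assoc, ← Complex.exp_add]
      push_cast
      ring_nf
    rw [heq]
    have hre' : (((c ^ r : ℝ) : ℂ) * Complex.exp (((r * a - θ : ℝ) : ℂ) * Complex.I)).re
        = c ^ r * Real.cos (r * a - θ) := by
      rw [Complex.exp_mul_I, ← Complex.ofReal_cos, ← Complex.ofReal_sin]
      rw [Complex.re_ofReal_mul]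
      congr 1
      rw [Complex.add_re, Complex.mul_I_re]
      simp only [Complex.ofReal_re, Complex.ofReal_im, neg_zero, add_zero]
    rw [hre']
    have hu : (r : ℝ) * a ≤ r * M := by
      exact mul_le_mul_of_nonneg_left ha2 hr0.le
    have hl : (r : ℝ) * m ≤ r * a := by
      exact mul_le_mul_of_nonneg_left ha1 hr0.le
    have hcos : 0 < Real.cos (r * a - θ) := by
      apply Real.cos_pos_of_mem_Ioo
      constructor
      · rw [hθdef]; nlinarith
      · rw [hθdef]; nlinarith
    positivity
  have hsum0 : (∑ i, z i ^ r * Complex.exp (-(θ : ℂ) * Complex.I)) = 0 := by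
    rw [← Finset.sum_mul, hsum, zero_mul]
  have hpos : 0 < (∑ i, z i ^ r * Complex.exp (-(θ : ℂ) * Complex.I)).re := by
    rw [Complex.re_sum]
    exact Finset.sum_pos (fun i _ => key i) hne
  rw [hsum0] at hpos
  simp at hpos
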